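/- Let (U, P) be a probability space and let A_1, …, A_L (L ≥ 2) be events. Set W(i,j) := P(A_i ∩ A_j) − P(A_i)P(A_j), Δ := max_{1 ≤ i ≠ j ≤ L} |W(i,j)| and M := Σ_{i=1}^{L} P(A_i). If M > 0, then P(U \ ⋃_{1 ≤ i ≤ L} A_i) ≤ (L + L²·Δ)/M². -/

import Mathlib

open MeasureTheory

/-- **Chebyshev-type sieve lemma.** Let `(U, μ)` be a probability space and
`A_1, …, A_L` events (`L ≥ 2`). With `W(i,j) = P(A_i ∩ A_j) − P(A_i)P(A_j)`,
any `Δ` with `|W(i,j)| ≤ Δ` for all `i ≠ j`, and `M = Σ_i P(A_i) > 0`, we have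
`P(U \ ⋃ A_i) ≤ (L + L²Δ)/M²`. -/
theorem chebyshev_sieve {U : Type*} [MeasurableSpace U] (μ : Measure U)
    [IsProbabilityMeasure μ] (L : ℕ) (hL : 2 ≤ L)
    (A : Fin L → Set U) (hA : ∀ i, MeasurableSet (A i))
    (Δ M : ℝ)
    (hΔ : ∀ i j : Fin L, i ≠ j →
      |(μ (A i ∩ A j)).toReal - (μ (A i)).toReal * (μ (A j)).toReal| ≤ Δ)
    (hM : M = ∑ i : Fin L, (μ (A i)).toReal) (hMpos : 0 < M) :
    (μ (Set.univ \ ⋃ i : Fin L, A i)).toReal ≤ ((L : ℝ) + (L : ℝ) ^ 2 * Δ) / M ^ 2 := by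
  classical
  set ind : Fin L → U → ℝ := fun i => (A i).indicator 1 with hind
  have hint_ind : ∀ i, Integrable (ind i) μ := fun i =>
    (integrable_indicator_iff (hA i)).2
      (integrableOn_const (measure_lt_top μ _).ne)
  have hE_ind : ∀ i, ∫ x, ind i x ∂μ = (μ (A i)).toReal := fun i => by
    simp [hind, integral_indicator_one (hA i), Measure.real]
  set indd : Fin L → Fin L → U → ℝ := fun i j => (A i ∩ A j).indicator 1 with hindd
  have hint_indd : ∀ i j, Integrable (indd i j) μ := fun i j =>
    (integrable_indicator_iff ((hA i).inter (hA j))).2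
      (integrableOn_const (measure_lt_top μ _).ne)
  have hE_indd : ∀ i j, ∫ x, indd i j x ∂μ = (μ (A i ∩ A j)).toReal := fun i j => by
    simp [hindd, integral_indicator_one ((hA i).inter (hA j)), Measure.real]
  set f : U → ℝ := fun x => ∑ i, ind i x with hf
  have hint_f : Integrable f μ := integrable_finset_sum _ (fun i _ => hint_ind i)
  have hEf : ∫ x, f x ∂μ = M := by
    rw [hf, integral_finset_sum _ (fun i _ => hint_ind i), hM]
    exact Finset.sum_congr rfl fun i _ => hE_ind i
  have hfsq : ∀ x, (f x) ^ 2 = ∑ i, ∑ j, indd i j x := by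
    intro x
    rw [hf, sq, Finset.sum_mul_sum]
    refine Finset.sum_congr rfl fun i _ => Finset.sum_congr rfl fun j _ => ?_
    simp only [hind, hindd, Set.inter_indicator_one, Pi.mul_apply]
  have heq : (fun x => (f x - M) ^ 2)
      = fun x => (∑ i, ∑ j, indd i j x) - (2 * M) * f x + M ^ 2 := by
    funext x
    rw [← hfsq x]; ring
  have hint_h : Integrable (fun x => (f x - M) ^ 2) μ := by
    rw [heq]
    exact ((integrable_finset_sum _ fun i _ =>
      integrable_finset_sum _ fun j _ => hint_indd i j).sub
        (hint_f.const_mul _)).add (integrable_const _)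
  set S : ℝ := ∑ i, ∑ j, (μ (A i ∩ A j)).toReal with hS
  have hEh : ∫ x, (f x - M) ^ 2 ∂μ = S - M ^ 2 := by
    rw [heq, integral_add, integral_sub, integral_finset_sum, integral_const_mul, hEf,
      integral_const]
    · simp only [Measure.real, measure_univ, ENNReal.toReal_one, smul_eq_mul, one_mul]
      have : ∑ i, ∫ x, ∑ j, indd i j x ∂μ = S := by
        rw [hS]
        refine Finset.sum_congr rfl fun i _ => ?_
        rw [integral_finset_sum _ (fun j _ => hint_indd i j)]
        exact Finset.sum_congr rfl fun j _ => hE_indd i j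
      rw [this]; ring
    · exact fun i _ => integrable_finset_sum _ fun j _ => hint_indd i j
    · exact integrable_finset_sum _ fun i _ =>
        integrable_finset_sum _ fun j _ => hint_indd i j
    · exact hint_f.const_mul _
    · exact (integrable_finset_sum _ fun i _ =>
        integrable_finset_sum _ fun j _ => hint_indd i j).sub (hint_f.const_mul _)
    · exact integrable_const _
  set B : Set U := Set.univ \ ⋃ i, A i with hB
  have hBm : MeasurableSet B := MeasurableSet.univ.diff (MeasurableSet.iUnion fun i => hA i)
  have hfB : Set.EqOn (fun x => (f x - M) ^ 2) (fun _ => M ^ 2) B := by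
    intro x hx
    have hx' : ∀ i, x ∉ A i := by
      have := hx.2
      simpa using this
    have hf0 : f x = 0 := by
      simp only [hf, hind]
      exact Finset.sum_eq_zero fun i _ => Set.indicator_of_notMem (hx' i) 1
    simp [hf0]
  have key : (μ B).toReal * M ^ 2 ≤ S - M ^ 2 := by
    have h1 : ∫ x in B, (f x - M) ^ 2 ∂μ = (μ B).toReal * M ^ 2 := by
      rw [setIntegral_congr_fun hBm hfB, setIntegral_const, smul_eq_mul]; rfl
    rw [← hEh, ← h1]
    exact setIntegral_le_integral hint_h (Filter.Eventually.of_forall fun x => sq_nonneg _)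
  -- Δ ≥ 0
  have hΔ0 : 0 ≤ Δ := by
    have h01 : (⟨0, by omega⟩ : Fin L) ≠ ⟨1, by omega⟩ := by
      simp [Fin.ext_iff]
    exact le_trans (abs_nonneg _) (hΔ _ _ h01)
  have hP1 : ∀ i, (μ (A i)).toReal ≤ 1 := fun i => by
    have := prob_le_one (μ := μ) (s := A i)
    simpa using ENNReal.toReal_mono ENNReal.one_ne_top this
  have hSb : S - M ^ 2 ≤ (L : ℝ) + (L : ℝ) ^ 2 * Δ := by
    have hM2 : M ^ 2 = ∑ i, ∑ j, (μ (A i)).toReal * (μ (A j)).toReal := by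
      rw [hM, sq, Finset.sum_mul_sum]
    have hsplit : S - M ^ 2 = ∑ i, ∑ j,
        ((μ (A i ∩ A j)).toReal - (μ (A i)).toReal * (μ (A j)).toReal) := by
      rw [hS, hM2, ← Finset.sum_sub_distrib]
      exact Finset.sum_congr rfl fun i _ => (Finset.sum_sub_distrib _ _).symm
    rw [hsplit]
    have hterm : ∀ i j : Fin L,
        (μ (A i ∩ A j)).toReal - (μ (A i)).toReal * (μ (A j)).toReal
          ≤ if i = j then (1 : ℝ) else Δ := by
      intro i j
      by_cases h : i = j
      · subst h
        rw [if_pos rfl, Set.inter_self]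
        nlinarith [hP1 i, ENNReal.toReal_nonneg (a := μ (A i))]
      · rw [if_neg h]
        exact le_trans (le_abs_self _) (hΔ i j h)
    calc ∑ i, ∑ j, ((μ (A i ∩ A j)).toReal - (μ (A i)).toReal * (μ (A j)).toReal)
        ≤ ∑ i : Fin L, ∑ j : Fin L, (if i = j then (1 : ℝ) else Δ) :=
          Finset.sum_le_sum fun i _ => Finset.sum_le_sum fun j _ => hterm i j
      _ = ∑ i : Fin L, ((1 - Δ) + (L : ℝ) * Δ) := by
          refine Finset.sum_congr rfl fun i _ => ?_
          have : ∀ j : Fin L, (if i = j then (1 : ℝ) else Δ)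
              = (if i = j then (1 - Δ : ℝ) else 0) + Δ := by
            intro j; split_ifs <;> ring
          rw [Finset.sum_congr rfl fun j _ => this j, Finset.sum_add_distrib,
            Finset.sum_ite_eq, Finset.sum_const]
          simp [Finset.card_univ]
      _ = (L : ℝ) + (L : ℝ) ^ 2 * Δ - (L : ℝ) * Δ := by
          rw [Finset.sum_const, Finset.card_univ]
          simp; ring
      _ ≤ (L : ℝ) + (L : ℝ) ^ 2 * Δ := by
          nlinarith [hΔ0, Nat.cast_nonneg (α := ℝ) L]
  rw [le_div_iff₀ (by positivity : (0:ℝ) < M ^ 2)]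
  calc (μ B).toReal * M ^ 2 ≤ S - M ^ 2 := key
    _ ≤ (L : ℝ) + (L : ℝ) ^ 2 * Δ := hSb
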